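/- arXiv:2410.00323 — 2 statements merged into one kernel-verified Lean document; each statement's English description precedes it below -/
import Mathlib

section
/- Let B_c ∈ ℝ^{n×m} have full row rank (B_c B_cᵀ invertible), let B_uc ∈ ℝ^{n×p}, x₀ ∈ ℝⁿ, and t_f > 0. Let u_uc : [0, t_f] → ℝ^{p} be integrable with mean value ū_uc = (1/t_f) ∫₀^{t_f} u_uc(t) dt. Consider square-integrable controlled inputs u_c : [0, t_f] → ℝ^{m} satisfying the finite-time regulation constraint x₀ + t_f B_c ū_c + t_f B_uc ū_uc = 0, where ū_c = (1/t_f) ∫₀^{t_f} u_c(t) dt. Then the infimum of ∫₀^{t_f} ‖u_c(t)‖₂² dt over all such u_c equals (1/t_f) ‖B_c† (x₀ + t_f B_uc ū_uc)‖₂², where B_c† = B_cᵀ (B_c B_cᵀ)⁻¹, and this infimum is attained by the constant controlled input u_c*(t) = −(1/t_f) B_c† (x₀ + t_f B_uc ū_uc) for all t ∈ [0, t_f]. -/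
section MalHelpers
open MeasureTheory Matrix

lemma mal_cs (tf : ℝ) (htf : 0 < tf) (f : ℝ → ℝ)
    (hf : IntegrableOn f (Set.Icc 0 tf)) (hf2 : IntegrableOn (fun t => f t ^ 2) (Set.Icc 0 tf)) :
    (∫ t in Set.Icc 0 tf, f t) ^ 2 ≤ tf * ∫ t in Set.Icc 0 tf, f t ^ 2 := by
  set I := ∫ t in Set.Icc 0 tf, f t with hI
  set c : ℝ := I / tf with hc
  have h0 : 0 ≤ ∫ t in Set.Icc 0 tf, (f t - c) ^ 2 :=
    setIntegral_nonneg measurableSet_Icc fun t _ => sq_nonneg _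
  have hconst : IntegrableOn (fun _ : ℝ => c ^ 2) (Set.Icc 0 tf) :=
    (integrableOn_const (C := c ^ 2) (by simp [Real.volume_Icc]))
  have hexp : (∫ t in Set.Icc 0 tf, (f t - c) ^ 2)
      = (∫ t in Set.Icc 0 tf, f t ^ 2) - 2 * c * I + tf * c ^ 2 := by
    have : ∀ t, (f t - c) ^ 2 = (f t ^ 2 + c ^ 2) - 2 * c * f t := fun t => by ring
    have hadd : IntegrableOn (fun t => f t ^ 2 + c ^ 2) (Set.Icc 0 tf) := hf2.add hconst
    have hmul : IntegrableOn (fun t => 2 * c * f t) (Set.Icc 0 tf) := hf.const_mul _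
    simp_rw [this]
    rw [integral_sub hadd hmul, integral_add hf2 hconst,
        MeasureTheory.integral_const_mul, setIntegral_const, Real.volume_real_Icc_of_le htf.le, sub_zero,
        smul_eq_mul]
    ring
  rw [hexp] at h0
  have e1 : 2 * c * I = 2 * (I ^ 2 / tf) := by rw [hc]; ring
  have e2 : tf * c ^ 2 = I ^ 2 / tf := by rw [hc]; field_simp
  rw [e1, e2] at h0
  have := (div_le_iff₀ htf).mp (by linarith : I ^ 2 / tf ≤ ∫ t in Set.Icc 0 tf, f t ^ 2)
  linarith

lemma mal_proj {m : ℕ} (P : Matrix (Fin m) (Fin m) ℝ) (hsym : Pᵀ = P) (hid : P * P = P)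
    (u : Fin m → ℝ) : ∑ i, (P.mulVec u i) ^ 2 ≤ ∑ i, (u i) ^ 2 := by
  set w := P.mulVec u with hw
  have key : ∑ i, u i * w i = ∑ i, w i * w i := by
    have h1 : w ⬝ᵥ w = u ⬝ᵥ w := by
      rw [hw, Matrix.dotProduct_mulVec, ← Matrix.mulVec_transpose, hsym,
        Matrix.mulVec_mulVec, hid, dotProduct_comm]
    simpa [dotProduct] using h1.symm
  have h0 : 0 ≤ ∑ i, (u i - w i) ^ 2 := Finset.sum_nonneg fun i _ => sq_nonneg _
  have hexp : ∑ i, (u i - w i) ^ 2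
      = ∑ i, (u i) ^ 2 - 2 * ∑ i, u i * w i + ∑ i, w i * w i := by
    rw [Finset.mul_sum, ← Finset.sum_sub_distrib, ← Finset.sum_add_distrib]
    exact Finset.sum_congr rfl fun i _ => by ring
  have hw2 : ∑ i, w i * w i = ∑ i, w i ^ 2 := by simp [sq]
  rw [hexp, key, hw2] at h0
  linarith
end MalHelpers

open Matrix

/-- Malfunctioning energy: for the malfunctioning driftless system
`ẋ = B_c u_c + B_uc u_uc`, `x(0) = x₀`, with `B_c` of full row rank and a given
uncontrolled input `u_uc` with mean `ū_uc`, the minimum of `∫₀^{t_f} ‖u_c(t)‖₂² dt`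
over all square-integrable controlled inputs satisfying the regulation constraint
`x₀ + t_f B_c ū_c + t_f B_uc ū_uc = 0` equals
`(1/t_f) ‖B_c† (x₀ + t_f B_uc ū_uc)‖₂²` where `B_c† = B_cᵀ (B_c B_cᵀ)⁻¹`, and it is
attained by the constant controlled input
`u_c*(t) = −(1/t_f) B_c† (x₀ + t_f B_uc ū_uc)`. -/
theorem malfunctioning_energy
    {n m p : ℕ} (Bc : Matrix (Fin n) (Fin m) ℝ) (hBc : IsUnit (Bc * Bcᵀ).det)
    (Buc : Matrix (Fin n) (Fin p) ℝ) (x₀ : Fin n → ℝ) (tf : ℝ) (htf : 0 < tf)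
    (Bcdag : Matrix (Fin m) (Fin n) ℝ) (hBcdag : Bcdag = Bcᵀ * (Bc * Bcᵀ)⁻¹)
    (uuc : ℝ → Fin p → ℝ) (huuc : MeasureTheory.IntegrableOn uuc (Set.Icc 0 tf))
    (ubaruc : Fin p → ℝ) (hubaruc : ubaruc = (1 / tf) • ∫ t in Set.Icc 0 tf, uuc t) :
    IsLeast {E : ℝ | ∃ uc : ℝ → Fin m → ℝ,
        MeasureTheory.IntegrableOn uc (Set.Icc 0 tf) ∧
        MeasureTheory.IntegrableOn (fun t => ∑ i, (uc t i) ^ 2) (Set.Icc 0 tf) ∧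
        x₀ + tf • Bc.mulVec ((1 / tf) • ∫ t in Set.Icc 0 tf, uc t)
           + tf • Buc.mulVec ubaruc = 0 ∧
        E = ∫ t in Set.Icc 0 tf, ∑ i, (uc t i) ^ 2}
      ((1 / tf) * ∑ i, (Bcdag.mulVec (x₀ + tf • Buc.mulVec ubaruc) i) ^ 2) ∧
    (x₀ + tf • Bc.mulVec ((1 / tf) • ∫ _t in Set.Icc 0 tf,
          (-(1 / tf)) • Bcdag.mulVec (x₀ + tf • Buc.mulVec ubaruc))
        + tf • Buc.mulVec ubaruc = 0 ∧
     (∫ _t in Set.Icc 0 tf,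
        ∑ i, (((-(1 / tf)) • Bcdag.mulVec (x₀ + tf • Buc.mulVec ubaruc)) i) ^ 2) =
       (1 / tf) * ∑ i, (Bcdag.mulVec (x₀ + tf • Buc.mulVec ubaruc) i) ^ 2) := by

  have hBcBcdag : Bc * Bcdag = 1 := by
    rw [hBcdag, ← Matrix.mul_assoc, Matrix.mul_nonsing_inv _ hBc]
  set v : Fin n → ℝ := x₀ + tf • Buc.mulVec ubaruc with hv
  set w : Fin m → ℝ := Bcdag.mulVec v with hw
  have hBcw : Bc.mulVec w = v := by
    rw [hw, Matrix.mulVec_mulVec, hBcBcdag, Matrix.one_mulVec]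
  have htfne : tf ≠ 0 := ne_of_gt htf
  have hμ : (MeasureTheory.volume (Set.Icc (0:ℝ) tf)) < ⊤ := by simp [Real.volume_Icc]
  -- the constant candidate
  have hconstInt : ∫ _t in Set.Icc (0:ℝ) tf, ((-(1 / tf)) • w) = tf • ((-(1 / tf)) • w) := by
    rw [MeasureTheory.setIntegral_const, Real.volume_real_Icc_of_le htf.le, sub_zero]
  have hmean : (1 / tf) • ∫ _t in Set.Icc (0:ℝ) tf, ((-(1 / tf)) • w) = (-(1 / tf)) • w := by
    rw [hconstInt, smul_smul, one_div, inv_mul_cancel₀ htfne, one_smul]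
  have hconstraint : x₀ + tf • Bc.mulVec ((1 / tf) • ∫ _t in Set.Icc (0:ℝ) tf,
      ((-(1 / tf)) • w)) + tf • Buc.mulVec ubaruc = 0 := by
    rw [hmean, Matrix.mulVec_smul, hBcw, smul_smul]
    have : tf * -(1 / tf) = -1 := by field_simp
    rw [this, hv]
    simp only [neg_smul, one_smul]
    abel
  have henergy : (∫ _t in Set.Icc (0:ℝ) tf, ∑ i, (((-(1 / tf)) • w) i) ^ 2)
      = (1 / tf) * ∑ i, (w i) ^ 2 := by
    rw [MeasureTheory.setIntegral_const, Real.volume_real_Icc_of_le htf.le, sub_zero,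
      smul_eq_mul]
    have : ∀ i, (((-(1 / tf)) • w) i) ^ 2 = (1 / tf) ^ 2 * (w i) ^ 2 := fun i => by
      simp [Pi.smul_apply, smul_eq_mul]; ring
    rw [Finset.sum_congr rfl fun i _ => this i, ← Finset.mul_sum]
    field_simp
  constructor
  · constructor
    · -- membership: the constant control achieves the value
      refine ⟨fun _t => (-(1 / tf)) • w, ?_, ?_, hconstraint, henergy.symm⟩
      · exact MeasureTheory.integrableOn_const hμ.ne
      · exact MeasureTheory.integrableOn_const hμ.ne
    · -- lower bound
      rintro E ⟨uc, hint, hint2, hcon, hE⟩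
      set ub : Fin m → ℝ := (1 / tf) • ∫ t in Set.Icc (0:ℝ) tf, uc t with hub
      have hIuc : (∫ t in Set.Icc (0:ℝ) tf, uc t) = tf • ub := by
        rw [hub, smul_smul, mul_one_div, div_self htfne, one_smul]
      -- constraint rearranged
      have hvub : v = (-tf) • Bc.mulVec ub := by
        have : x₀ + tf • Bc.mulVec ub + tf • Buc.mulVec ubaruc = 0 := hcon
        have h2 : v + tf • Bc.mulVec ub = 0 := by rw [hv]; linear_combination (norm := module) this
        have := eq_neg_of_add_eq_zero_left h2
        rw [this, neg_smul]
      -- projection matrix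
      set P : Matrix (Fin m) (Fin m) ℝ := Bcdag * Bc with hP
      have hsymBB : (Bc * Bcᵀ)ᵀ = Bc * Bcᵀ := by
        rw [Matrix.transpose_mul, Matrix.transpose_transpose]
      have hsym : Pᵀ = P := by
        rw [hP, Matrix.transpose_mul, hBcdag, Matrix.transpose_mul,
          Matrix.transpose_transpose, Matrix.transpose_nonsing_inv, hsymBB,
          Matrix.mul_assoc]
      have hid : P * P = P := by
        rw [hP, Matrix.mul_assoc, ← Matrix.mul_assoc Bc Bcdag Bc, hBcBcdag,
          Matrix.one_mul]
      have hwP : w = (-tf) • P.mulVec ub := by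
        rw [hw, hvub, Matrix.mulVec_smul, hP, ← Matrix.mulVec_mulVec]
      have hsum_w : ∑ i, (w i) ^ 2 ≤ tf ^ 2 * ∑ i, (ub i) ^ 2 := by
        have h1 : ∑ i, (w i) ^ 2 = tf ^ 2 * ∑ i, (P.mulVec ub i) ^ 2 := by
          rw [Finset.mul_sum]
          refine Finset.sum_congr rfl fun i _ => ?_
          rw [hwP]
          simp [Pi.smul_apply, smul_eq_mul]
          ring
        rw [h1]
        exact mul_le_mul_of_nonneg_left (mal_proj P hsym hid ub) (sq_nonneg tf)
      -- per-component Cauchy-Schwarz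
      have hcomp : ∀ i : Fin m, MeasureTheory.IntegrableOn (fun t => uc t i) (Set.Icc 0 tf) :=
        fun i => (ContinuousLinearMap.proj (R := ℝ) (φ := fun _ : Fin m => ℝ) i).integrable_comp hint
      have hcomp2 : ∀ i : Fin m, MeasureTheory.IntegrableOn (fun t => (uc t i) ^ 2) (Set.Icc 0 tf) := by
        intro i
        refine MeasureTheory.Integrable.mono' hint2 ?_ ?_
        · have := (hcomp i).aestronglyMeasurable
          exact this.pow 2
        · refine Filter.Eventually.of_forall fun t => ?_
          rw [Real.norm_eq_abs, abs_of_nonneg (sq_nonneg _)]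
          exact Finset.single_le_sum (fun j _ => sq_nonneg (uc t j)) (Finset.mem_univ i)
      have hinti : ∀ i : Fin m, (∫ t in Set.Icc (0:ℝ) tf, uc t i) = tf * ub i := by
        intro i
        have := ((ContinuousLinearMap.proj (R := ℝ) (φ := fun _ : Fin m => ℝ) i).integral_comp_comm hint).symm
        simp only [ContinuousLinearMap.proj_apply] at this
        rw [← this, hIuc, Pi.smul_apply, smul_eq_mul]
      have hCS : ∀ i : Fin m, (tf * ub i) ^ 2 ≤ tf * ∫ t in Set.Icc (0:ℝ) tf, (uc t i) ^ 2 := by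
        intro i
        rw [← hinti i]
        exact mal_cs tf htf (fun t => uc t i) (hcomp i) (hcomp2 i)
      have hsumint : (∫ t in Set.Icc (0:ℝ) tf, ∑ i, (uc t i) ^ 2)
          = ∑ i, ∫ t in Set.Icc (0:ℝ) tf, (uc t i) ^ 2 :=
        MeasureTheory.integral_finset_sum Finset.univ fun i _ => hcomp2 i
      have hElb : tf ^ 2 * ∑ i, (ub i) ^ 2 ≤ tf * E := by
        have h1 : ∑ i, (tf * ub i) ^ 2 ≤ tf * ∑ i, ∫ t in Set.Icc (0:ℝ) tf, (uc t i) ^ 2 := by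
          rw [Finset.mul_sum]
          exact Finset.sum_le_sum fun i _ => hCS i
        have h2 : ∑ i, (tf * ub i) ^ 2 = tf ^ 2 * ∑ i, (ub i) ^ 2 := by
          rw [Finset.mul_sum]; exact Finset.sum_congr rfl fun i _ => by ring
        rw [hE, hsumint]
        linarith
      -- combine
      have hfinal : ∑ i, (w i) ^ 2 ≤ tf * E := le_trans hsum_w hElb
      rw [div_mul_eq_mul_div, one_mul, div_le_iff₀ htf]
      calc ∑ i, (w i) ^ 2 ≤ tf * E := hfinal
        _ = E * tf := mul_comm _ _
  · exact ⟨hconstraint, henergy⟩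
end

section
/- Let B = [B_c, B_uc] ∈ ℝ^{n×(m+1)} with B_c ∈ ℝ^{n×m} and B_uc ∈ ℝⁿ a single column (p = 1), and suppose both B Bᵀ and B_c B_cᵀ are invertible. Set B† = Bᵀ (B Bᵀ)⁻¹, B_c† = B_cᵀ (B_c B_cᵀ)⁻¹, and L = λ_max(B_c†ᵀ B_c†). Let t_f > 0 and R > 0. Then for every x₀ ∈ ℝⁿ with ‖x₀‖₂ ≥ R, the ratio of the nominal energy E_N*(x₀, t_f) = (1/t_f) ‖B† x₀‖₂² to the worst-case total energy Ē_M(x₀, t_f) = (1/t_f) ‖B_c† x₀‖₂² + t_f (‖B_uc‖₂² + 1) + 2 |B_ucᵀ B_c†ᵀ B_c† x₀| satisfies E_N*(x₀, t_f) / Ē_M(x₀, t_f) ≥ R² λ_min(B†ᵀ B†) / (R² L + 2 R t_f ‖B_c†ᵀ B_c† B_uc‖₂ + t_f² (‖B_uc‖₂² + 1)); consequently the energetic resilience metric r_M(t_f, R) = inf_{‖x₀‖₂ ≥ R} E_N*(x₀, t_f) / Ē_M(x₀, t_f) is bounded below by the same quantity. -/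
open Matrix

lemma sum_sq_mulVec {a b : Type*} [Fintype a] [Fintype b] (M : Matrix a b ℝ) (x : b → ℝ) :
    ∑ i, (M *ᵥ x) i ^ 2 = x ⬝ᵥ (Mᵀ * M) *ᵥ x := by
  rw [← Matrix.mulVec_mulVec, Matrix.dotProduct_mulVec, Matrix.vecMul_transpose]
  simp [dotProduct, sq]

lemma quad_decomp {k : Type*} [Fintype k] [DecidableEq k] {A : Matrix k k ℝ}
    (hA : A.IsHermitian) (x : k → ℝ) :
    ∃ y : k → ℝ, x ⬝ᵥ A *ᵥ x = ∑ i, hA.eigenvalues i * y i ^ 2 ∧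
      ∑ i, x i ^ 2 = ∑ i, y i ^ 2 := by
  set U : Matrix k k ℝ := (hA.eigenvectorUnitary : Matrix k k ℝ) with hU
  have hstar : star U = Uᵀ := by
    ext i j
    simp [Matrix.star_eq_conjTranspose, Matrix.conjTranspose_apply]
  refine ⟨Uᵀ *ᵥ x, ?_, ?_⟩
  · conv_lhs => rw [hA.spectral_theorem, Unitary.conjStarAlgAut_apply]
    rw [← Matrix.mulVec_mulVec, ← Matrix.mulVec_mulVec, Matrix.dotProduct_mulVec,
      ← Matrix.mulVec_transpose, hstar]
    simp [dotProduct, Matrix.mulVec_diagonal, sq]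
    ring_nf
    exact Finset.sum_congr rfl fun i _ => by ring
  · have h1 : U * star U = 1 := (Matrix.mem_unitaryGroup_iff).mp hA.eigenvectorUnitary.2
    have := sum_sq_mulVec Uᵀ x
    rw [this]
    have h2 : Uᵀᵀ * Uᵀ = 1 := by
      rw [Matrix.transpose_transpose, ← hstar]; exact h1
    rw [h2, Matrix.one_mulVec]
    simp [dotProduct, sq]

lemma rayleigh_low {k : Type*} [Fintype k] [DecidableEq k] {A : Matrix k k ℝ}
    (hA : A.IsHermitian) (x : k → ℝ) :
    (⨅ i, hA.eigenvalues i) * ∑ i, x i ^ 2 ≤ x ⬝ᵥ A *ᵥ x := by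
  obtain ⟨y, h1, h2⟩ := quad_decomp hA x
  rw [h1, h2, Finset.mul_sum]
  refine Finset.sum_le_sum fun i _ => ?_
  haveI : Nonempty k := ⟨i⟩
  exact mul_le_mul_of_nonneg_right (ciInf_le (Finite.bddBelow_range _) i) (sq_nonneg _)

lemma rayleigh_high {k : Type*} [Fintype k] [DecidableEq k] {A : Matrix k k ℝ}
    (hA : A.IsHermitian) (x : k → ℝ) :
    x ⬝ᵥ A *ᵥ x ≤ (⨆ i, hA.eigenvalues i) * ∑ i, x i ^ 2 := by
  obtain ⟨y, h1, h2⟩ := quad_decomp hA x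
  rw [h1, h2, Finset.mul_sum]
  refine Finset.sum_le_sum fun i _ => ?_
  haveI : Nonempty k := ⟨i⟩
  exact mul_le_mul_of_nonneg_right (le_ciSup (Finite.bddAbove_range _) i) (sq_nonneg _)

lemma cs_dot (k : Type*) [Fintype k] (v w : k → ℝ) :
    |v ⬝ᵥ w| ≤ Real.sqrt (∑ i, v i ^ 2) * Real.sqrt (∑ i, w i ^ 2) := by
  rw [← Real.sqrt_mul (by positivity), ← Real.sqrt_sq_eq_abs]
  exact Real.sqrt_le_sqrt (Finset.sum_mul_sq_le_sq_mul_sq _ _ _)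


set_option maxHeartbeats 1000000 in
/-- Bound on the energetic resilience metric for the loss of one actuator
(Proposition 2): with `B = [B_c, B_uc]`, `B Bᵀ` and `B_c B_cᵀ` invertible,
`B† = Bᵀ (B Bᵀ)⁻¹`, `B_c† = B_cᵀ (B_c B_cᵀ)⁻¹`, `L = λ_max(B_c†ᵀ B_c†)`, `t_f > 0` and
`R > 0`, for every `x₀` with `‖x₀‖₂ ≥ R` the ratio of the nominal energy
`E_N* = (1/t_f) ‖B† x₀‖₂²` to the worst-case total energy
`Ē_M = (1/t_f) ‖B_c† x₀‖₂² + t_f (‖B_uc‖₂² + 1) + 2 |B_ucᵀ B_c†ᵀ B_c† x₀|` is at least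
`R² λ_min(B†ᵀ B†) / (R² L + 2 R t_f ‖B_c†ᵀ B_c† B_uc‖₂ + t_f² (‖B_uc‖₂² + 1))`; hence
the energetic resilience metric `r_M(t_f, R) = inf_{‖x₀‖₂ ≥ R} E_N*/Ē_M` is bounded
below by the same quantity. -/
theorem energetic_resilience_bound
    {n m : ℕ} (Bc : Matrix (Fin n) (Fin m) ℝ) (Buc : Fin n → ℝ)
    (B : Matrix (Fin n) (Fin m ⊕ Fin 1) ℝ)
    (hBdef : B = Matrix.fromCols Bc (Matrix.of fun i (_ : Fin 1) => Buc i))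
    (hB : IsUnit (B * Bᵀ).det) (hBc : IsUnit (Bc * Bcᵀ).det)
    (Bdag : Matrix (Fin m ⊕ Fin 1) (Fin n) ℝ) (hBdag : Bdag = Bᵀ * (B * Bᵀ)⁻¹)
    (Bcdag : Matrix (Fin m) (Fin n) ℝ) (hBcdag : Bcdag = Bcᵀ * (Bc * Bcᵀ)⁻¹)
    (hH : (Bdagᵀ * Bdag).IsHermitian) (hHc : (Bcdagᵀ * Bcdag).IsHermitian)
    (tf R : ℝ) (htf : 0 < tf) (hR : 0 < R) :
    (∀ x₀ : Fin n → ℝ, R ≤ Real.sqrt (∑ i, (x₀ i) ^ 2) →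
      ((1 / tf) * ∑ i, (Bdag.mulVec x₀ i) ^ 2) /
        ((1 / tf) * (∑ i, (Bcdag.mulVec x₀ i) ^ 2)
          + tf * ((∑ i, (Buc i) ^ 2) + 1)
          + 2 * |Buc ⬝ᵥ Bcdagᵀ.mulVec (Bcdag.mulVec x₀)|)
      ≥ R ^ 2 * (⨅ i, hH.eigenvalues i) /
          (R ^ 2 * (⨆ i, hHc.eigenvalues i)
            + 2 * R * tf * Real.sqrt (∑ i, (Bcdagᵀ.mulVec (Bcdag.mulVec Buc) i) ^ 2)
            + tf ^ 2 * ((∑ i, (Buc i) ^ 2) + 1))) ∧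
    sInf {r : ℝ | ∃ x₀ : Fin n → ℝ, R ≤ Real.sqrt (∑ i, (x₀ i) ^ 2) ∧
        r = ((1 / tf) * ∑ i, (Bdag.mulVec x₀ i) ^ 2) /
          ((1 / tf) * (∑ i, (Bcdag.mulVec x₀ i) ^ 2)
            + tf * ((∑ i, (Buc i) ^ 2) + 1)
            + 2 * |Buc ⬝ᵥ Bcdagᵀ.mulVec (Bcdag.mulVec x₀)|)}
      ≥ R ^ 2 * (⨅ i, hH.eigenvalues i) /
          (R ^ 2 * (⨆ i, hHc.eigenvalues i)
            + 2 * R * tf * Real.sqrt (∑ i, (Bcdagᵀ.mulVec (Bcdag.mulVec Buc) i) ^ 2)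
            + tf ^ 2 * ((∑ i, (Buc i) ^ 2) + 1)) := by
  have hPSD : (Bdagᵀ * Bdag).PosSemidef := by
    have ht : Bdagᵀ = Bdagᴴ := by
      ext i j; simp [Matrix.conjTranspose_apply]
    rw [ht]; exact Matrix.posSemidef_conjTranspose_mul_self _
  have hPSDc : (Bcdagᵀ * Bcdag).PosSemidef := by
    have ht : Bcdagᵀ = Bcdagᴴ := by
      ext i j; simp [Matrix.conjTranspose_apply]
    rw [ht]; exact Matrix.posSemidef_conjTranspose_mul_self _
  set lam := ⨅ i, hH.eigenvalues i with hlam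
  set mu := ⨆ i, hHc.eigenvalues i with hmu
  have hlam0 : 0 ≤ lam := Real.iInf_nonneg fun i => hPSD.eigenvalues_nonneg i
  have hmu0 : 0 ≤ mu := Real.iSup_nonneg fun i => hPSDc.eigenvalues_nonneg i
  set c := Real.sqrt (∑ i, (Bcdagᵀ.mulVec (Bcdag.mulVec Buc) i) ^ 2) with hcdef
  have hc0 : 0 ≤ c := Real.sqrt_nonneg _
  set d := (∑ i, (Buc i) ^ 2) + 1 with hddef
  have hd0 : (0:ℝ) < d := by positivity
  set den := R ^ 2 * mu + 2 * R * tf * c + tf ^ 2 * d with hdendef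
  clear_value lam mu c d den
  have hden0 : 0 < den := by
    have h1 : 0 < tf ^ 2 * d := by positivity
    have h2 : 0 ≤ R ^ 2 * mu := mul_nonneg (sq_nonneg R) hmu0
    have h3 : 0 ≤ 2 * R * tf * c := by
      apply mul_nonneg _ hc0; nlinarith
    rw [hdendef]; linarith
  have main : ∀ x₀ : Fin n → ℝ, R ≤ Real.sqrt (∑ i, (x₀ i) ^ 2) →
      ((1 / tf) * ∑ i, (Bdag.mulVec x₀ i) ^ 2) /
        ((1 / tf) * (∑ i, (Bcdag.mulVec x₀ i) ^ 2)
          + tf * d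
          + 2 * |Buc ⬝ᵥ Bcdagᵀ.mulVec (Bcdag.mulVec x₀)|)
      ≥ R ^ 2 * lam / den := by
    intro x₀ hx
    set s := Real.sqrt (∑ i, (x₀ i) ^ 2) with hsdef
    have hs2 : s ^ 2 = ∑ i, (x₀ i) ^ 2 := Real.sq_sqrt (by positivity)
    have hs0 : 0 < s := lt_of_lt_of_le hR hx
    set SB := ∑ i, (Bdag.mulVec x₀ i) ^ 2 with hSBdef
    set SC := ∑ i, (Bcdag.mulVec x₀ i) ^ 2 with hSCdef
    set A := |Buc ⬝ᵥ Bcdagᵀ.mulVec (Bcdag.mulVec x₀)| with hAdef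
    clear_value s SB SC A
    have hSC0 : 0 ≤ SC := by rw [hSCdef]; positivity
    have hA0 : 0 ≤ A := by rw [hAdef]; exact abs_nonneg _
    have hnum : lam * s ^ 2 ≤ SB := by
      rw [hlam, hs2, hSBdef, sum_sq_mulVec]
      exact rayleigh_low hH x₀
    have hdenc : SC ≤ mu * s ^ 2 := by
      rw [hmu, hs2, hSCdef, sum_sq_mulVec]
      exact rayleigh_high hHc x₀
    have habs : A ≤ c * s := by
      have e : Buc ⬝ᵥ Bcdagᵀ.mulVec (Bcdag.mulVec x₀)
          = (Bcdagᵀ.mulVec (Bcdag.mulVec Buc)) ⬝ᵥ x₀ := by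
        rw [Matrix.dotProduct_mulVec Buc Bcdagᵀ, Matrix.vecMul_transpose,
          Matrix.dotProduct_mulVec, ← Matrix.mulVec_transpose]
      rw [hAdef, e, hcdef, hsdef]
      exact cs_dot _ _ _
    have hDpos : 0 < (1 / tf) * SC + tf * d + 2 * A := by
      have h1 : 0 ≤ (1 / tf) * SC := mul_nonneg (by positivity) hSC0
      have h2 : 0 < tf * d := mul_pos htf hd0
      linarith
    have htfne : tf ≠ 0 := ne_of_gt htf
    rw [ge_iff_le, div_le_div_iff₀ hden0 hDpos]
    have step1 : SC + tf ^ 2 * d + 2 * tf * A ≤ mu * s ^ 2 + tf ^ 2 * d + 2 * tf * (c * s) := by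
      have := mul_le_mul_of_nonneg_left habs (by linarith : (0:ℝ) ≤ 2 * tf)
      linarith
    have step2 : R ^ 2 * lam * (mu * s ^ 2 + tf ^ 2 * d + 2 * tf * (c * s))
        ≤ lam * s ^ 2 * den := by
      rw [hdendef]
      nlinarith [mul_nonneg (mul_nonneg (mul_nonneg hlam0 hc0) htf.le)
          (mul_nonneg (mul_nonneg hR.le hs0.le) (sub_nonneg.2 hx)),
        mul_nonneg (mul_nonneg (mul_nonneg hlam0 hd0.le) (sq_nonneg tf))
          (mul_nonneg (sub_nonneg.2 hx) (add_nonneg hR.le hs0.le))]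
    calc R ^ 2 * lam * ((1 / tf) * SC + tf * d + 2 * A)
        = (1 / tf) * (R ^ 2 * lam * (SC + tf ^ 2 * d + 2 * tf * A)) := by
          field_simp
      _ ≤ (1 / tf) * (lam * s ^ 2 * den) := by
          apply mul_le_mul_of_nonneg_left _ (by positivity)
          calc R ^ 2 * lam * (SC + tf ^ 2 * d + 2 * tf * A)
              ≤ R ^ 2 * lam * (mu * s ^ 2 + tf ^ 2 * d + 2 * tf * (c * s)) :=
                mul_le_mul_of_nonneg_left step1 (by positivity)
            _ ≤ lam * s ^ 2 * den := step2
      _ ≤ (1 / tf) * (SB * den) :=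
          mul_le_mul_of_nonneg_left (mul_le_mul_of_nonneg_right hnum hden0.le) (by positivity)
      _ = (1 / tf) * SB * den := by ring
  refine ⟨main, ?_⟩
  rcases Nat.eq_zero_or_pos n with hn | hn
  · subst hn
    have hb : R ^ 2 * lam / den = 0 := by
      rw [hlam, Real.iInf_of_isEmpty]; simp
    rw [ge_iff_le, hb]
    apply Real.sInf_nonneg
    rintro r ⟨x₀, hx, rfl⟩
    simp only [Finset.univ_eq_empty, Finset.sum_empty, Real.sqrt_zero] at hx
    linarith
  · apply le_csInf
    · refine ⟨_, ⟨Pi.single ⟨0, hn⟩ R, ?_, rfl⟩⟩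
      have hsum : ∑ i, (Pi.single (⟨0, hn⟩ : Fin n) R i) ^ 2 = R ^ 2 := by
        simp [Pi.single_apply, sq, ite_mul, mul_ite]
      rw [hsum, Real.sqrt_sq hR.le]
    · rintro r ⟨x₀, hx, rfl⟩
      exact main x₀ hx
end
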